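/- The minimum of a linear functional P ↦ <C,P> over the Birkhoff polytope of n×n doubly stochastic matrices is attained at some permutation matrix. -/
import Mathlib

open Finset

lemma ite_sum_eq (n : ℕ) (C : Matrix (Fin n) (Fin n) ℝ) (σ : Equiv.Perm (Fin n)) :
    (∑ i, ∑ j, C i j * (if σ i = j then (1 : ℝ) else 0)) = ∑ i, C i (σ i) := by
  simp [mul_ite]

/-- The minimum of the linear functional `P ↦ ⟪C,P⟫` over the Birkhoff polytope of
`n × n` doubly stochastic matrices is attained at some permutation matrix. -/
theorem stmt1 (n : ℕ) (hn : 0 < n) (C : Matrix (Fin n) (Fin n) ℝ) :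
    ∃ σ : Equiv.Perm (Fin n),
      ∀ P : Matrix (Fin n) (Fin n) ℝ,
        (∀ i j, 0 ≤ P i j) →
        (∀ i, ∑ j, P i j = 1) →
        (∀ j, ∑ i, P i j = 1) →
        (∑ i, ∑ j, C i j * (if σ i = j then (1 : ℝ) else 0)) ≤ ∑ i, ∑ j, C i j * P i j := by
  obtain ⟨σ, -, hσ⟩ := Finset.exists_min_image (Finset.univ : Finset (Equiv.Perm (Fin n)))
    (fun σ => ∑ i, C i (σ i)) ⟨1, mem_univ 1⟩
  refine ⟨σ, fun P hP1 hP2 hP3 => ?_⟩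
  have hP : P ∈ doublyStochastic ℝ (Fin n) :=
    mem_doublyStochastic_iff_sum.2 ⟨hP1, hP2, hP3⟩
  obtain ⟨w, hw0, hw1, hwP⟩ := exists_eq_sum_perm_of_mem_doublyStochastic hP
  have hperm : ∀ τ : Equiv.Perm (Fin n),
      (∑ i, ∑ j, C i j * (τ.permMatrix ℝ) i j) = ∑ i, C i (τ i) := by
    intro τ
    simp [Equiv.Perm.permMatrix, PEquiv.toMatrix_apply, Equiv.toPEquiv_apply, mul_ite]
  have hPij : ∀ i j, P i j = ∑ τ : Equiv.Perm (Fin n), w τ * (if τ i = j then (1:ℝ) else 0) := by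
    intro i j
    rw [← hwP]
    simp [Equiv.Perm.permMatrix, PEquiv.toMatrix_apply, Equiv.toPEquiv_apply, Matrix.sum_apply,
      Matrix.smul_apply, smul_eq_mul, mul_ite, mul_one, mul_zero]
  have hi : ∀ i, ∑ j, C i j * P i j = ∑ τ : Equiv.Perm (Fin n), w τ * C i (τ i) := by
    intro i
    calc ∑ j, C i j * P i j
        = ∑ j, ∑ τ : Equiv.Perm (Fin n), C i j * (w τ * if τ i = j then (1:ℝ) else 0) := by
          simp [hPij, Finset.mul_sum]
      _ = ∑ τ : Equiv.Perm (Fin n), ∑ j, C i j * (w τ * if τ i = j then (1:ℝ) else 0) :=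
          Finset.sum_comm
      _ = ∑ τ : Equiv.Perm (Fin n), w τ * C i (τ i) := by
          refine Finset.sum_congr rfl fun τ _ => ?_
          rw [Finset.sum_eq_single (τ i)] <;> simp +contextual [mul_comm, eq_comm]
  have key : ∑ i, ∑ j, C i j * P i j = ∑ τ : Equiv.Perm (Fin n), w τ * ∑ i, C i (τ i) := by
    simp only [hi, Finset.mul_sum]
    exact Finset.sum_comm
  rw [ite_sum_eq, key]
  calc ∑ i, C i (σ i) = ∑ τ : Equiv.Perm (Fin n), w τ * ∑ i, C i (σ i) := by
        rw [← Finset.sum_mul, hw1, one_mul]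
    _ ≤ ∑ τ : Equiv.Perm (Fin n), w τ * ∑ i, C i (τ i) :=
        Finset.sum_le_sum fun τ _ => mul_le_mul_of_nonneg_left (hσ τ (mem_univ τ)) (hw0 τ)
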